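/- The piecewise linear map T on [2/3, 2] defined by T(x) = 2x for x ∈ [2/3, 1] and T(x) = (2/3)x for x ∈ (1, 2] has no periodic points: there is no x ∈ [2/3, 2] and n ≥ 1 with Tⁿ(x) = x. -/

import Mathlib

open Set

/-- The piecewise linear map T on [2/3, 2]. -/
noncomputable def T (x : ℝ) : ℝ := if x ≤ 1 then 2 * x else (2 / 3) * x

lemma T_iter_form (x : ℝ) (hx : 0 < x) :
    ∀ n : ℕ, ∃ a b : ℕ, a + b = n ∧ T^[n] x = 2 ^ a * (2 / 3) ^ b * x := by
  intro n
  induction n with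
  | zero => exact ⟨0, 0, rfl, by simp⟩
  | succ n ih =>
    obtain ⟨a, b, hab, h⟩ := ih
    rw [Function.iterate_succ_apply', h]
    unfold T
    by_cases hc : 2 ^ a * (2 / 3) ^ b * x ≤ 1
    · rw [if_pos hc]
      exact ⟨a + 1, b, by omega, by ring⟩
    · rw [if_neg hc]
      exact ⟨a, b + 1, by omega, by ring⟩

theorem T_no_periodic_points :
    ¬ ∃ x ∈ Icc (2 / 3 : ℝ) 2, ∃ n : ℕ, 1 ≤ n ∧ T^[n] x = x := by
  rintro ⟨x, hx, n, hn, hfix⟩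
  have hx0 : 0 < x := lt_of_lt_of_le (by norm_num) hx.1
  obtain ⟨a, b, hab, h⟩ := T_iter_form x hx0 n
  rw [hfix] at h
  have hc : (2 : ℝ) ^ a * (2 / 3) ^ b = 1 := by
    have := mul_right_cancel₀ (ne_of_gt hx0) (by linarith [h] : 2 ^ a * (2 / 3) ^ b * x = 1 * x)
    linarith
  have h2 : (2 : ℝ) ^ (a + b) = 3 ^ b := by
    have h3 : (0 : ℝ) < 3 ^ b := by positivity
    field_simp [div_pow] at hc
    rw [pow_add]; rw [div_pow, ← mul_div_assoc, div_eq_one_iff_eq h3.ne'] at hc; linarith [hc]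
  have h2' : (2 : ℕ) ^ (a + b) = 3 ^ b := by
    exact_mod_cast h2
  rw [hab] at h2'
  have : b = 0 := by
    by_contra hb
    have : 2 ∣ 3 ^ b := h2' ▸ dvd_pow_self 2 (by omega)
    have := Nat.Prime.dvd_of_dvd_pow Nat.prime_two this
    omega
  simp [this] at h2'
  have := Nat.one_lt_two_pow_iff.mpr (by omega : n ≠ 0)
  omega
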